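/- Jacobi's identity for Pfaffians: if K is an invertible skew-symmetric 2n×2n matrix and E is a subset of indices of even cardinality, then Pf(K_{E^c}) = ± Pf(K) · Pf((K^{-1})_E), where K_{E^c} denotes the principal submatrix of K on the complement of E and (K^{-1})_E the principal submatrix of K^{-1} on E. In particular |Pf(K_{E^c})| = |Pf(K)| · |Pf((K^{-1})_E)| over the reals. -/

import Mathlib

open Finset

/-- The Pfaffian of a `2n × 2n` real matrix, defined by the sum-over-permutations formula
`Pf(A) = (1/(2^n n!)) ∑_{σ} sgn σ ∏_{i<n} A_{σ(2i), σ(2i+1)}`. -/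
noncomputable def pfaffian (n : ℕ) (A : Matrix (Fin (2 * n)) (Fin (2 * n)) ℝ) : ℝ :=
  (((2 ^ n * Nat.factorial n : ℕ) : ℝ))⁻¹ *
    ∑ σ : Equiv.Perm (Fin (2 * n)),
      ((Equiv.Perm.sign σ : ℤ) : ℝ) *
        ∏ i : Fin n, A (σ ⟨2 * i.val, by omega⟩) (σ ⟨2 * i.val + 1, by omega⟩)

namespace PfAux
open Matrix

def lo (n : ℕ) (i : Fin n) : Fin (2 * n) := ⟨2 * i.val, by omega⟩
def hi (n : ℕ) (i : Fin n) : Fin (2 * n) := ⟨2 * i.val + 1, by omega⟩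

lemma lo_val (n : ℕ) (i : Fin n) : (lo n i).val = 2 * i.val := rfl
lemma hi_val (n : ℕ) (i : Fin n) : (hi n i).val = 2 * i.val + 1 := rfl

lemma pfaffian_eq (n : ℕ) (A : Matrix (Fin (2 * n)) (Fin (2 * n)) ℝ) :
    pfaffian n A = (((2 ^ n * Nat.factorial n : ℕ) : ℝ))⁻¹ *
      ∑ σ : Equiv.Perm (Fin (2 * n)), ((Equiv.Perm.sign σ : ℤ) : ℝ) *
        ∏ i : Fin n, A (σ (lo n i)) (σ (hi n i)) := rfl

def pairE (n : ℕ) : Fin n × Fin 2 ≃ Fin (2 * n) where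
  toFun x := ⟨2 * x.1.val + x.2.val, by omega⟩
  invFun j := (⟨j.val / 2, by have := j.isLt; omega⟩, ⟨j.val % 2, by omega⟩)
  left_inv x := by
    obtain ⟨i, b⟩ := x
    have hb := b.isLt
    have h1 : (2 * i.val + b.val) / 2 = i.val := by omega
    have h2 : (2 * i.val + b.val) % 2 = b.val := by omega
    exact Prod.ext (Fin.ext h1) (Fin.ext h2)
  right_inv j := Fin.ext (by show 2 * (j.val / 2) + j.val % 2 = j.val; omega)

lemma pairE_lo (n : ℕ) (i : Fin n) : pairE n (i, 0) = lo n i := by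
  apply Fin.ext
  show 2 * i.val + (0 : Fin 2).val = 2 * i.val
  simp

lemma pairE_hi (n : ℕ) (i : Fin n) : pairE n (i, 1) = hi n i := by
  apply Fin.ext
  show 2 * i.val + (1 : Fin 2).val = 2 * i.val + 1
  simp

lemma prod_pairs {M : Type*} [CommMonoid M] (n : ℕ) (f : Fin (2 * n) → M) :
    ∏ j, f j = ∏ i : Fin n, (f (lo n i) * f (hi n i)) := by
  rw [← Equiv.prod_comp (pairE n) f, Fintype.prod_prod_type]
  refine Finset.prod_congr rfl fun i _ => ?_
  rw [Fin.prod_univ_two, pairE_lo, pairE_hi]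

def flat (n : ℕ) (g : Fin n → Fin (2 * n) × Fin (2 * n)) : Fin (2 * n) → Fin (2 * n) :=
  fun j => if j.val % 2 = 0 then (g ⟨j.val / 2, by have := j.isLt; omega⟩).1
    else (g ⟨j.val / 2, by have := j.isLt; omega⟩).2

lemma flat_lo (n : ℕ) (g : Fin n → Fin (2 * n) × Fin (2 * n)) (i : Fin n) :
    flat n g (lo n i) = (g i).1 := by
  have h1 : ((lo n i).val) % 2 = 0 := by show 2 * i.val % 2 = 0; omega
  have h2 : (⟨(lo n i).val / 2, by have := (lo n i).isLt; omega⟩ : Fin n) = i :=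
    Fin.ext (by show 2 * i.val / 2 = i.val; omega)
  simp only [flat]
  rw [if_pos h1, h2]

lemma flat_hi (n : ℕ) (g : Fin n → Fin (2 * n) × Fin (2 * n)) (i : Fin n) :
    flat n g (hi n i) = (g i).2 := by
  have h1 : ¬ ((hi n i).val) % 2 = 0 := by show ¬ (2 * i.val + 1) % 2 = 0; omega
  have h2 : (⟨(hi n i).val / 2, by have := (hi n i).isLt; omega⟩ : Fin n) = i :=
    Fin.ext (by show (2 * i.val + 1) / 2 = i.val; omega)
  simp only [flat]
  rw [if_neg h1, h2]

def Phi (n : ℕ) (τ : Equiv.Perm (Fin (2 * n))) : Fin n → Fin (2 * n) × Fin (2 * n) :=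
  fun i => (τ (lo n i), τ (hi n i))

lemma lo_or_hi (n : ℕ) (j : Fin (2 * n)) :
    (j = lo n ⟨j.val / 2, by have := j.isLt; omega⟩) ∨
      (j = hi n ⟨j.val / 2, by have := j.isLt; omega⟩) := by
  rcases Nat.even_or_odd j.val with ⟨c, hc⟩ | ⟨c, hc⟩
  · exact Or.inl (Fin.ext (by show j.val = 2 * (j.val / 2); omega))
  · exact Or.inr (Fin.ext (by show j.val = 2 * (j.val / 2) + 1; omega))

lemma flat_Phi (n : ℕ) (τ : Equiv.Perm (Fin (2 * n))) : flat n (Phi n τ) = ⇑τ := by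
  funext j
  rcases lo_or_hi n j with hj | hj
  · rw [hj, flat_lo]; rfl
  · rw [hj, flat_hi]; rfl

lemma Phi_inj (n : ℕ) : Function.Injective (Phi n) := by
  intro τ τ' h
  have := congrArg (flat n) h
  rw [flat_Phi, flat_Phi] at this
  exact Equiv.coe_fn_injective this

theorem pf_congruence (n : ℕ) (A B : Matrix (Fin (2 * n)) (Fin (2 * n)) ℝ) :
    pfaffian n (Bᵀ * A * B) = B.det * pfaffian n A := by
  classical
  have hBAB : ∀ x y : Fin (2 * n), (Bᵀ * A * B) x y
      = ∑ pq : Fin (2 * n) × Fin (2 * n), B pq.1 x * A pq.1 pq.2 * B pq.2 y := by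
    intro x y
    rw [Fintype.sum_prod_type]
    rw [Matrix.mul_apply, Finset.sum_comm]
    refine Finset.sum_congr rfl fun q _ => ?_
    rw [Matrix.mul_apply, Finset.sum_mul]
    refine Finset.sum_congr rfl fun p _ => ?_
    rw [Matrix.transpose_apply]
  have key : ∀ σ : Equiv.Perm (Fin (2 * n)),
      (∏ i : Fin n, (Bᵀ * A * B) (σ (lo n i)) (σ (hi n i)))
      = ∑ g : Fin n → Fin (2 * n) × Fin (2 * n),
          (∏ i : Fin n, A (g i).1 (g i).2) * ∏ j : Fin (2 * n), B (flat n g j) (σ j) := by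
    intro σ
    simp_rw [hBAB]
    rw [Finset.prod_univ_sum, Fintype.piFinset_univ]
    refine Finset.sum_congr rfl fun g _ => ?_
    rw [prod_pairs n (fun j => B (flat n g j) (σ j))]
    simp_rw [flat_lo, flat_hi]
    rw [← Finset.prod_mul_distrib]
    refine Finset.prod_congr rfl fun i _ => ?_
    ring
  have inner : ∀ (f : Fin (2 * n) → Fin (2 * n)),
      (∑ σ : Equiv.Perm (Fin (2 * n)), ((Equiv.Perm.sign σ : ℤ) : ℝ) * ∏ j, B (f j) (σ j))
      = (B.submatrix f id).det := by
    intro f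
    rw [Matrix.det_apply]
    refine Fintype.sum_equiv (Equiv.inv (Equiv.Perm (Fin (2 * n)))) _ _ fun σ => ?_
    have hp : (∏ j, B (f j) (σ j)) = ∏ j, B (f (σ⁻¹ j)) j := by
      rw [← Equiv.prod_comp σ (fun j => B (f (σ⁻¹ j)) j)]
      simp
    rw [hp, Equiv.inv_apply, Equiv.Perm.sign_inv]
    simp [Matrix.submatrix_apply, Units.smul_def, zsmul_eq_mul]
  rw [pfaffian_eq, pfaffian_eq]
  have h1 : (∑ σ : Equiv.Perm (Fin (2 * n)), ((Equiv.Perm.sign σ : ℤ) : ℝ) *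
        ∏ i : Fin n, (Bᵀ * A * B) (σ (lo n i)) (σ (hi n i)))
      = ∑ g : Fin n → Fin (2 * n) × Fin (2 * n),
          (∏ i : Fin n, A (g i).1 (g i).2) * (B.submatrix (flat n g) id).det := by
    simp_rw [key, Finset.mul_sum]
    rw [Finset.sum_comm]
    refine Finset.sum_congr rfl fun g _ => ?_
    rw [← inner (flat n g), Finset.mul_sum]
    refine Finset.sum_congr rfl fun σ _ => by ring
  rw [h1]
  have hvanish : ∀ g : Fin n → Fin (2 * n) × Fin (2 * n), g ∈ Finset.univ →
      g ∉ Finset.image (Phi n) Finset.univ →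
      (∏ i : Fin n, A (g i).1 (g i).2) * (B.submatrix (flat n g) id).det = 0 := by
    intro g _ hg
    have hninj : ¬ Function.Injective (flat n g) := by
      intro hinj
      apply hg
      have hbij := (Finite.injective_iff_bijective).mp hinj
      refine Finset.mem_image.mpr ⟨Equiv.ofBijective _ hbij, Finset.mem_univ _, ?_⟩
      funext i
      have h1 : (Phi n (Equiv.ofBijective _ hbij) i).1 = (g i).1 := by
        show flat n g (lo n i) = _
        rw [flat_lo]
      have h2 : (Phi n (Equiv.ofBijective _ hbij) i).2 = (g i).2 := by
        show flat n g (hi n i) = _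
        rw [flat_hi]
      exact Prod.ext h1 h2
    obtain ⟨j₁, j₂, heq, hne⟩ := Function.not_injective_iff.mp hninj
    have hdet : (B.submatrix (flat n g) id).det = 0 := by
      refine Matrix.det_zero_of_row_eq hne ?_
      funext y
      simp [Matrix.submatrix_apply, heq]
    rw [hdet, mul_zero]
  rw [← Finset.sum_subset (Finset.subset_univ (Finset.image (Phi n) Finset.univ)) hvanish]
  rw [Finset.sum_image (fun τ _ τ' _ h => Phi_inj n h)]
  have h2 : ∀ τ : Equiv.Perm (Fin (2 * n)),
      (∏ i : Fin n, A ((Phi n τ) i).1 ((Phi n τ) i).2) *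
          (B.submatrix (flat n (Phi n τ)) id).det
      = B.det * (((Equiv.Perm.sign τ : ℤ) : ℝ) * ∏ i : Fin n, A (τ (lo n i)) (τ (hi n i))) := by
    intro τ
    rw [flat_Phi, Matrix.det_permute]
    show (∏ i : Fin n, A (τ (lo n i)) (τ (hi n i))) * _ = _
    push_cast
    ring
  simp_rw [h2]
  rw [← Finset.mul_sum]
  ring


------------------

def D2 (c : ℝ) : Matrix (Fin 2) (Fin 2) ℝ :=
  fun a b => if a.val = 0 ∧ b.val = 1 then c else if a.val = 1 ∧ b.val = 0 then -c else 0

def eB (n : ℕ) : Fin 2 × Fin n ≃ Fin (2 * n) := (Equiv.prodComm _ _).trans (pairE n)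

def Dmat (n : ℕ) (ε : Fin n → ℝ) : Matrix (Fin (2 * n)) (Fin (2 * n)) ℝ :=
  (Matrix.blockDiagonal (fun i => D2 (ε i))).submatrix (eB n).symm (eB n).symm

lemma eB_symm_pairE (n : ℕ) (x : Fin n × Fin 2) : (eB n).symm (pairE n x) = (x.2, x.1) := by
  simp [eB, Equiv.symm_apply_eq, Equiv.prodComm, Prod.swap]

lemma Dmat_pair (n : ℕ) (ε : Fin n → ℝ) (j j' : Fin n) (a b : Fin 2) :
    Dmat n ε (pairE n (j, a)) (pairE n (j', b)) =
      if j = j' then D2 (ε j) a b else 0 := by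
  rw [Dmat, Matrix.submatrix_apply, eB_symm_pairE, eB_symm_pairE,
    Matrix.blockDiagonal_apply]


lemma det_D2 (c : ℝ) : (D2 c).det = c ^ 2 := by
  rw [Matrix.det_fin_two]
  simp [D2]
  ring

lemma det_Dmat (n : ℕ) (ε : Fin n → ℝ) : (Dmat n ε).det = ∏ i, (ε i) ^ 2 := by
  rw [Dmat, Matrix.det_submatrix_equiv_self, Matrix.det_blockDiagonal]
  exact Finset.prod_congr rfl fun i _ => det_D2 (ε i)

def Psi (n : ℕ) (πs : Equiv.Perm (Fin n) × (Fin n → Equiv.Perm (Fin 2))) :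
    Equiv.Perm (Fin (2 * n)) :=
  (pairE n).permCongr
    ((Equiv.prodCongrRight πs.2).trans (Equiv.prodCongrLeft (fun _ : Fin 2 => πs.1)))

lemma Psi_pairE (n : ℕ) (π : Equiv.Perm (Fin n)) (s : Fin n → Equiv.Perm (Fin 2))
    (i : Fin n) (b : Fin 2) :
    Psi n (π, s) (pairE n (i, b)) = pairE n (π i, s i b) := by
  simp [Psi, Equiv.permCongr_apply, Equiv.prodCongrRight, Equiv.prodCongrLeft]

lemma sign_Psi (n : ℕ) (πs : Equiv.Perm (Fin n) × (Fin n → Equiv.Perm (Fin 2))) :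
    Equiv.Perm.sign (Psi n πs) = ∏ i, Equiv.Perm.sign (πs.2 i) := by
  rw [Psi, Equiv.Perm.sign_permCongr]
  rw [show (Equiv.prodCongrRight πs.2).trans (Equiv.prodCongrLeft (fun _ : Fin 2 => πs.1))
      = (Equiv.prodCongrLeft (fun _ : Fin 2 => πs.1)) * (Equiv.prodCongrRight πs.2) from rfl]
  rw [Equiv.Perm.sign_mul, Equiv.Perm.sign_prodCongrLeft, Equiv.Perm.sign_prodCongrRight]
  simp [pow_two]
lemma perm2_cases (p : Equiv.Perm (Fin 2)) : p = 1 ∨ p = Equiv.swap 0 1 := by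
  revert p; decide
lemma perm2_ext (p q : Equiv.Perm (Fin 2)) (h0 : p 0 = q 0) : p = q := by
  revert p q; decide
lemma D2_perm (c : ℝ) (p : Equiv.Perm (Fin 2)) :
    D2 c (p 0) (p 1) = ((Equiv.Perm.sign p : ℤ) : ℝ) * c := by
  rcases perm2_cases p with h | h <;> subst h <;> simp [D2]

lemma fin2_cases (b : Fin 2) : b = 0 ∨ b = 1 := by revert b; decide

lemma D2_self (c : ℝ) (a : Fin 2) : D2 c a a = 0 := by
  unfold D2; split_ifs with h1 h2 <;> first | omega | rfl

lemma Dmat_pair_ne {n : ℕ} {ε : Fin n → ℝ} {i i' : Fin n} {a b : Fin 2}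
    (h : Dmat n ε (pairE n (i, a)) (pairE n (i', b)) ≠ 0) : i = i' ∧ a ≠ b := by
  rw [Dmat_pair] at h
  split_ifs at h with hii
  · refine ⟨hii, fun hab => ?_⟩
    subst hab
    exact h (D2_self _ _)
  · exact absurd rfl h

lemma psi_image {n : ℕ} {ε : Fin n → ℝ} (σ : Equiv.Perm (Fin (2 * n)))
    (hσ : σ ∉ Finset.image (Psi n) Finset.univ) :
    (∏ i : Fin n, Dmat n ε (σ (lo n i)) (σ (hi n i))) = 0 := by
  by_contra hne
  apply hσ
  have hfac : ∀ i : Fin n, Dmat n ε (σ (lo n i)) (σ (hi n i)) ≠ 0 := by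
    intro i
    exact Finset.prod_ne_zero_iff.mp hne i (Finset.mem_univ i)
  -- coordinates
  set u : Fin n → Fin n × Fin 2 := fun i => (pairE n).symm (σ (lo n i)) with hu
  set v : Fin n → Fin n × Fin 2 := fun i => (pairE n).symm (σ (hi n i)) with hv
  have hσlo : ∀ i, σ (lo n i) = pairE n (u i) := fun i => (Equiv.apply_symm_apply _ _).symm
  have hσhi : ∀ i, σ (hi n i) = pairE n (v i) := fun i => (Equiv.apply_symm_apply _ _).symm
  have hkey : ∀ i : Fin n, (u i).1 = (v i).1 ∧ (u i).2 ≠ (v i).2 := by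
    intro i
    have := hfac i
    rw [hσlo i, hσhi i] at this
    exact Dmat_pair_ne (by
      rw [show ((u i).1, (u i).2) = u i from rfl, show ((v i).1, (v i).2) = v i from rfl]
      exact this)
  have hπinj : Function.Injective (fun i => (u i).1) := by
    intro i i' hii
    by_contra hne'
    simp only at hii
    -- three distinct values in the same block
    have d1 : σ (lo n i) ≠ σ (hi n i) := by
      intro hc
      have := σ.injective hc
      have : (lo n i).val = (hi n i).val := congrArg Fin.val this
      simp [lo, hi] at this
    have d2 : σ (lo n i) ≠ σ (lo n i') := by
      intro hc
      have := σ.injective hc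
      have hvv : (lo n i).val = (lo n i').val := congrArg Fin.val this
      simp only [lo] at hvv
      exact hne' (Fin.ext (by omega))
    have d3 : σ (hi n i) ≠ σ (lo n i') := by
      intro hc
      have := σ.injective hc
      have hvv : (hi n i).val = (lo n i').val := congrArg Fin.val this
      simp only [hi, lo] at hvv
      omega
    rw [hσlo i, hσhi i] at d1
    rw [hσlo i, hσlo i'] at d2
    rw [hσhi i, hσlo i'] at d3
    have e1 : (u i).2 ≠ (v i).2 := (hkey i).2
    have e2 : (u i).2 ≠ (u i').2 := by
      intro hc
      exact d2 (congrArg (pairE n) (Prod.ext hii hc))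
    have e3 : (v i).2 ≠ (u i').2 := by
      intro hc
      apply d3
      apply congrArg (pairE n)
      exact Prod.ext ((hkey i).1.symm.trans hii) hc
    have b1 := ((u i).2).isLt
    have b2 := ((v i).2).isLt
    have b3 := ((u i').2).isLt
    rw [Ne, Fin.ext_iff] at e1 e2 e3
    omega
  have hπbij := (Finite.injective_iff_bijective).mp hπinj
  set πp : Equiv.Perm (Fin n) := Equiv.ofBijective _ hπbij with hπp
  set s : Fin n → Equiv.Perm (Fin 2) :=
    fun i => if (u i).2 = 0 then 1 else Equiv.swap 0 1 with hs
  have hs0 : ∀ i, s i 0 = (u i).2 := by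
    intro i
    rcases fin2_cases (u i).2 with h | h <;> simp [hs, h]
  have hs1 : ∀ i, s i 1 = (v i).2 := by
    intro i
    have hne12 := (hkey i).2
    rcases fin2_cases (u i).2 with h | h <;> rcases fin2_cases (v i).2 with h' | h' <;>
      simp [hs, h, h'] <;> simp [h, h'] at hne12
  refine Finset.mem_image.mpr ⟨(πp, s), Finset.mem_univ _, ?_⟩
  apply Equiv.ext
  intro j
  obtain ⟨⟨i, b⟩, rfl⟩ := (pairE n).surjective j
  rw [Psi_pairE]
  rcases fin2_cases b with hb | hb <;> subst hb
  · rw [pairE_lo, hσlo i]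
    show pairE n ((u i).1, s i 0) = pairE n (u i)
    rw [hs0 i]
  · rw [pairE_hi, hσhi i]
    show pairE n ((u i).1, s i 1) = pairE n (v i)
    rw [hs1 i, (hkey i).1]

lemma Psi_inj (n : ℕ) : Function.Injective (Psi n) := by
  rintro ⟨π, s⟩ ⟨π', s'⟩ h
  have key : ∀ (i : Fin n) (b : Fin 2), (π i, s i b) = (π' i, s' i b) := by
    intro i b
    apply (pairE n).injective
    rw [← Psi_pairE, ← Psi_pairE, h]
  refine Prod.ext ?_ ?_
  · exact Equiv.ext fun i => congrArg Prod.fst (key i 0)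
  · funext i
    exact perm2_ext _ _ (congrArg Prod.snd (key i 0))

lemma pf_Dmat (n : ℕ) (ε : Fin n → ℝ) : pfaffian n (Dmat n ε) = ∏ i, ε i := by
  rw [pfaffian_eq]
  rw [← Finset.sum_subset (Finset.subset_univ (Finset.image (Psi n) Finset.univ))
    (fun σ _ hσ => by rw [psi_image σ hσ, mul_zero])]
  rw [Finset.sum_image (fun a _ b _ h => Psi_inj n h)]
  have hterm : ∀ πs : Equiv.Perm (Fin n) × (Fin n → Equiv.Perm (Fin 2)),
      ((Equiv.Perm.sign (Psi n πs) : ℤ) : ℝ) *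
        ∏ i : Fin n, Dmat n ε (Psi n πs (lo n i)) (Psi n πs (hi n i)) = ∏ i, ε i := by
    rintro ⟨π, s⟩
    have h1 : ∀ i : Fin n, Dmat n ε (Psi n (π, s) (lo n i)) (Psi n (π, s) (hi n i))
        = ((Equiv.Perm.sign (s i) : ℤ) : ℝ) * ε (π i) := by
      intro i
      rw [← pairE_lo, ← pairE_hi, Psi_pairE, Psi_pairE]
      rw [Dmat_pair, if_pos rfl, D2_perm]
    simp_rw [h1]
    rw [sign_Psi]
    rw [Finset.prod_mul_distrib]
    push_cast
    rw [← mul_assoc, ← Finset.prod_mul_distrib]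
    have h2 : ∀ i : Fin n, ((Equiv.Perm.sign (s i) : ℤ) : ℝ) *
        ((Equiv.Perm.sign (s i) : ℤ) : ℝ) = 1 := by
      intro i
      rcases Int.units_eq_one_or (Equiv.Perm.sign (s i)) with h | h <;> rw [h] <;> norm_num
    rw [Finset.prod_congr rfl (fun i _ => h2 i), Finset.prod_const_one, one_mul]
    exact Equiv.prod_comp π ε
  rw [Finset.sum_congr rfl (fun πs _ => hterm πs)]
  rw [Finset.sum_const, nsmul_eq_mul]
  rw [Finset.card_univ, Fintype.card_prod, Fintype.card_perm, Fintype.card_fun,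
    Fintype.card_perm]
  have hfac : ((2 ^ n * Nat.factorial n : ℕ) : ℝ) ≠ 0 := by
    positivity
  simp only [Fintype.card_fin, Nat.factorial_two]
  field_simp
  ring


------------------------------------------------------------------
-- Part 3: canonical form

lemma Dmat_apply (n : ℕ) (ε : Fin n → ℝ) (x y : Fin (2 * n)) :
    Dmat n ε x y = if x.val / 2 = y.val / 2 then
      (if x.val % 2 = 0 ∧ y.val % 2 = 1 then ε ⟨x.val / 2, by have := x.isLt; omega⟩
       else if x.val % 2 = 1 ∧ y.val % 2 = 0 then -ε ⟨x.val / 2, by have := x.isLt; omega⟩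
       else 0) else 0 := by
  have hsymm : (eB n).symm x = (⟨x.val % 2, by have := x.isLt; omega⟩,
      ⟨x.val / 2, by have := x.isLt; omega⟩) := rfl
  have hsymmy : (eB n).symm y = (⟨y.val % 2, by have := y.isLt; omega⟩,
      ⟨y.val / 2, by have := y.isLt; omega⟩) := rfl
  rw [Dmat, Matrix.submatrix_apply, hsymm, hsymmy, Matrix.blockDiagonal_apply]
  simp only [Fin.mk.injEq, D2]

lemma Dmat_zero (n : ℕ) : Dmat n (fun _ => 0) = 0 := by
  ext x y
  rw [Dmat_apply]
  split_ifs <;> simp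

def ee (n : ℕ) : Fin 2 ⊕ Fin (2 * n) ≃ Fin (2 * (n + 1)) :=
  finSumFinEquiv.trans (finCongr (by omega))

lemma ee_inl_val (n : ℕ) (a : Fin 2) : (ee n (Sum.inl a)).val = a.val := by
  simp [ee]

lemma ee_inr_val (n : ℕ) (a : Fin (2 * n)) : (ee n (Sum.inr a)).val = 2 + a.val := by
  simp [ee]
  omega

lemma Dsplit (n : ℕ) (c : ℝ) (ε' : Fin n → ℝ) :
    (Dmat (n + 1) (Fin.cons c ε')).submatrix (ee n) (ee n)
      = Matrix.fromBlocks (D2 c) 0 0 (Dmat n ε') := by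
  ext x y
  rcases x with a | a <;> rcases y with b | b <;>
    rw [Matrix.submatrix_apply]
  · rw [Matrix.fromBlocks_apply₁₁, Dmat_apply]
    have ha := a.isLt
    have hb := b.isLt
    have hva := ee_inl_val n a
    have hvb := ee_inl_val n b
    have hcons : ∀ (h : (ee n (Sum.inl a)).val / 2 < n + 1),
        (Fin.cons c ε' : Fin (n+1) → ℝ) ⟨(ee n (Sum.inl a)).val / 2, h⟩ = c := by
      intro h
      have : (⟨(ee n (Sum.inl a)).val / 2, h⟩ : Fin (n+1)) = 0 := Fin.ext (by simp; omega)
      rw [this, Fin.cons_zero]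
    rw [if_pos (by omega)]
    unfold D2
    split_ifs with h1 h2
    any_goals rfl
    any_goals rw [hcons]
    all_goals (exfalso; omega)
  · rw [Matrix.fromBlocks_apply₁₂, Dmat_apply]
    have ha := a.isLt
    have hva := ee_inl_val n a
    have hvb := ee_inr_val n b
    rw [if_neg (by omega)]
    rfl
  · rw [Matrix.fromBlocks_apply₂₁, Dmat_apply]
    have hb := b.isLt
    have hva := ee_inr_val n a
    have hvb := ee_inl_val n b
    rw [if_neg (by omega)]
    rfl
  · rw [Matrix.fromBlocks_apply₂₂, Dmat_apply, Dmat_apply]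
    have hva := ee_inr_val n a
    have hvb := ee_inr_val n b
    have hcons : ∀ (h : (ee n (Sum.inr a)).val / 2 < n + 1),
        (Fin.cons c ε' : Fin (n+1) → ℝ) ⟨(ee n (Sum.inr a)).val / 2, h⟩
          = ε' ⟨a.val / 2, by have := a.isLt; omega⟩ := by
      intro h
      have : (⟨(ee n (Sum.inr a)).val / 2, h⟩ : Fin (n+1))
          = Fin.succ ⟨a.val / 2, by have := a.isLt; omega⟩ := Fin.ext (by
        show (ee n (Sum.inr a)).val / 2 = a.val / 2 + 1
        omega)
      rw [this, Fin.cons_succ]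
    split_ifs with h1 h2 h3
    any_goals rfl
    any_goals rw [hcons]
    all_goals (exfalso; omega)

lemma exists_perm_two {α : Type*} [DecidableEq α] {i0 i1 p q : α}
    (h01 : i0 ≠ i1) (hpq : p ≠ q) : ∃ ρ : Equiv.Perm α, ρ i0 = p ∧ ρ i1 = q := by
  classical
  set ρ0 := Equiv.swap i0 p with hρ0
  have h0 : ρ0 i0 = p := Equiv.swap_apply_left _ _
  by_cases h : ρ0.symm q = i1
  · exact ⟨ρ0, h0, by rw [← h, Equiv.apply_symm_apply]⟩
  · have hne1 : i0 ≠ ρ0.symm q := by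
      intro hc
      apply hpq
      rw [← h0, hc, Equiv.apply_symm_apply]
    refine ⟨ρ0 * Equiv.swap i1 (ρ0.symm q), ?_, ?_⟩
    · show ρ0 (Equiv.swap i1 (ρ0.symm q) i0) = p
      rw [Equiv.swap_apply_of_ne_of_ne h01 hne1, h0]
    · show ρ0 (Equiv.swap i1 (ρ0.symm q) i1) = q
      rw [Equiv.swap_apply_left, Equiv.apply_symm_apply]

lemma matrix_inv_neg {N : Type*} [Fintype N] [DecidableEq N]
    (A : Matrix N N ℝ) (h : IsUnit A.det) : (-A)⁻¹ = -(A⁻¹) := by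
  apply Matrix.inv_eq_right_inv
  rw [neg_mul_neg, Matrix.mul_nonsing_inv _ h]

theorem skew_canonical (n : ℕ) :
    ∀ (A : Matrix (Fin (2 * n)) (Fin (2 * n)) ℝ), Aᵀ = -A →
    ∃ (B : Matrix (Fin (2 * n)) (Fin (2 * n)) ℝ) (ε : Fin n → ℝ),
      IsUnit B.det ∧ Bᵀ * A * B = Dmat n ε := by
  induction n with
  | zero =>
    intro A hA
    refine ⟨1, finZeroElim, by simp, ?_⟩
    haveI : IsEmpty (Fin (2 * 0)) := ⟨fun i => by have := i.isLt; omega⟩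
    haveI : Subsingleton (Matrix (Fin (2 * 0)) (Fin (2 * 0)) ℝ) :=
      Matrix.subsingleton_of_empty_left
    exact Subsingleton.elim _ _
  | succ n IH =>
    intro A hA
    by_cases hA0 : A = 0
    · refine ⟨1, fun _ => 0, by simp, ?_⟩
      rw [hA0, Dmat_zero]
      simp
    · -- a nonzero entry
      have hex : ∃ p q, A p q ≠ 0 := by
        by_contra h
        push_neg at h
        exact hA0 (by ext p q; rw [Matrix.zero_apply]; exact h p q)
      obtain ⟨p, q, hpq⟩ := hex
      have hdiag : ∀ r, A r r = 0 := by
        intro r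
        have := congrFun (congrFun hA r) r
        rw [Matrix.transpose_apply, Matrix.neg_apply] at this
        linarith
      have hpqne : p ≠ q := fun h => hpq (by rw [h, hdiag])
      set i0 : Fin (2 * (n + 1)) := ee n (Sum.inl 0) with hi0
      set i1 : Fin (2 * (n + 1)) := ee n (Sum.inl 1) with hi1
      have h01 : i0 ≠ i1 := by
        intro hc
        have := congrArg Fin.val hc
        rw [hi0, hi1, ee_inl_val, ee_inl_val] at this
        simp at this
      obtain ⟨ρ, hρ0, hρ1⟩ := exists_perm_two h01 hpqne
      -- permuted matrix
      set A1 : Matrix (Fin (2 * (n + 1))) (Fin (2 * (n + 1))) ℝ := A.submatrix ρ ρ with hA1def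
      have hA1 : A1ᵀ = -A1 := by
        rw [hA1def, Matrix.transpose_submatrix, hA]
        ext x y
        simp [Matrix.submatrix_apply]
      have hA1diag : ∀ r, A1 r r = 0 := fun r => hdiag (ρ r)
      have hA1c : A1 i0 i1 = A p q := by rw [hA1def, Matrix.submatrix_apply, hρ0, hρ1]
      -- block matrix on Fin 2 ⊕ Fin 2n
      set Ah : Matrix (Fin 2 ⊕ Fin (2 * n)) (Fin 2 ⊕ Fin (2 * n)) ℝ :=
        A1.submatrix (ee n) (ee n) with hAhdef
      have hAh : Ahᵀ = -Ah := by
        rw [hAhdef, Matrix.transpose_submatrix, hA1]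
        ext x y
        simp [Matrix.submatrix_apply]
      set A11 := Ah.toBlocks₁₁ with h11
      set A12 := Ah.toBlocks₁₂ with h12
      set A21 := Ah.toBlocks₂₁ with h21
      set A22 := Ah.toBlocks₂₂ with h22
      have hblocks : Matrix.fromBlocks A11 A12 A21 A22 = Ah := Matrix.fromBlocks_toBlocks Ah
      have hskew : ∀ x y, Ah y x = - Ah x y := by
        intro x y
        have := congrFun (congrFun hAh x) y
        rwa [Matrix.transpose_apply, Matrix.neg_apply] at this
      have hA11T : A11ᵀ = -A11 := by
        ext x y
        rw [Matrix.transpose_apply, Matrix.neg_apply]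
        exact hskew (Sum.inl x) (Sum.inl y)
      have hA21T : A21 = -A12ᵀ := by
        ext x y
        rw [Matrix.neg_apply, Matrix.transpose_apply]
        exact hskew (Sum.inl y) (Sum.inr x)
      have hA22T : A22ᵀ = -A22 := by
        ext x y
        rw [Matrix.transpose_apply, Matrix.neg_apply]
        exact hskew (Sum.inr x) (Sum.inr y)
      -- A11 entries
      set c : ℝ := A p q with hc
      have e00 : A11 0 0 = 0 := hA1diag i0
      have e11 : A11 1 1 = 0 := hA1diag i1
      have e01 : A11 0 1 = c := hA1c
      have e10 : A11 1 0 = -c := by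
        show Ah (Sum.inl 1) (Sum.inl 0) = -c
        rw [hskew (Sum.inl 0) (Sum.inl 1)]
        show -(A1 i0 i1) = -c
        rw [hA1c]
      have hdet11 : A11.det = c ^ 2 := by
        rw [Matrix.det_fin_two, e00, e11, e01, e10]
        ring
      have hdet11u : IsUnit A11.det := by
        rw [hdet11]
        exact (isUnit_iff_ne_zero.mpr (pow_ne_zero 2 hpq))
      -- Schur congruence
      set X := A11⁻¹ * A12 with hX
      set T : Matrix (Fin 2 ⊕ Fin (2 * n)) (Fin 2 ⊕ Fin (2 * n)) ℝ :=
        Matrix.fromBlocks 1 (-X) 0 1 with hT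
      have hXT : Xᵀ = -(A12ᵀ * A11⁻¹) := by
        rw [hX, Matrix.transpose_mul, Matrix.transpose_nonsing_inv, hA11T,
          matrix_inv_neg _ hdet11u, Matrix.mul_neg]
      have hA11X : A11 * X = A12 := by
        rw [hX, ← Matrix.mul_assoc, Matrix.mul_nonsing_inv _ hdet11u, Matrix.one_mul]
      set S := A22 - A21 * X with hS
      have hTt : Tᵀ = Matrix.fromBlocks 1 0 (-Xᵀ) 1 := by
        rw [hT, Matrix.fromBlocks_transpose]
        simp
      have hcong : Tᵀ * Ah * T = Matrix.fromBlocks A11 0 0 S := by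
        rw [← hblocks, hTt, Matrix.mul_assoc, Matrix.fromBlocks_multiply,
          Matrix.fromBlocks_multiply]
        simp only [Matrix.mul_one, Matrix.mul_zero, Matrix.one_mul, Matrix.zero_mul,
          add_zero, zero_add, Matrix.mul_neg, hA11X, neg_add_cancel, Matrix.mul_zero]
        have hb21 : -Xᵀ * A11 + A21 = 0 := by
          rw [hXT, hA21T, neg_neg, Matrix.mul_assoc,
            Matrix.nonsing_inv_mul _ hdet11u, Matrix.mul_one, add_neg_cancel]
        have hb22 : -(A21 * X) + A22 = S := by
          rw [hS, neg_add_eq_sub]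
        rw [hb21, hb22]
      have hdetT : T.det = 1 := by
        rw [hT, Matrix.det_fromBlocks_zero₂₁]
        simp
      have hSkewS : Sᵀ = -S := by
        have h1 : Sᵀ = A22ᵀ - Xᵀ * A21ᵀ := by
          rw [hS, Matrix.transpose_sub, Matrix.transpose_mul]
        rw [h1, hA22T, hXT, hA21T, Matrix.transpose_neg, Matrix.transpose_transpose,
          hS, hA21T, hX]
        simp only [Matrix.neg_mul, Matrix.mul_neg, neg_neg, Matrix.mul_assoc]
        abel
      obtain ⟨B', ε', hB'u, hB'⟩ := IH S hSkewS
      set T2 : Matrix (Fin 2 ⊕ Fin (2 * n)) (Fin 2 ⊕ Fin (2 * n)) ℝ :=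
        Matrix.fromBlocks 1 0 0 B' with hT2
      have hT2t : T2ᵀ = Matrix.fromBlocks 1 0 0 B'ᵀ := by
        rw [hT2, Matrix.fromBlocks_transpose]
        simp
      have hcong2 : T2ᵀ * (Tᵀ * Ah * T) * T2 = Matrix.fromBlocks A11 0 0 (Dmat n ε') := by
        rw [hcong, hT2t, Matrix.fromBlocks_multiply, Matrix.fromBlocks_multiply]
        simp only [Matrix.mul_one, Matrix.one_mul, Matrix.mul_zero, Matrix.zero_mul,
          add_zero, zero_add]
        rw [hB']
      set Bh := T * T2 with hBh
      have hBhdet : IsUnit Bh.det := by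
        rw [hBh, Matrix.det_mul, hT, hT2, Matrix.det_fromBlocks_zero₂₁,
          Matrix.det_fromBlocks_zero₂₁]
        simpa using hB'u
      have hcong3 : Bhᵀ * Ah * Bh = Matrix.fromBlocks A11 0 0 (Dmat n ε') := by
        rw [hBh, Matrix.transpose_mul, ← hcong2]
        simp only [Matrix.mul_assoc]
      have hA11D2 : A11 = D2 c := by
        ext a b
        rcases fin2_cases a with ha | ha <;> subst ha <;>
          rcases fin2_cases b with hb | hb <;> subst hb
        · rw [e00]; norm_num [D2]
        · rw [e01]; norm_num [D2]
        · rw [e10]; norm_num [D2]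
        · rw [e11]; norm_num [D2]
      have hAh_back : Ah.submatrix ⇑(ee n).symm ⇑(ee n).symm = A1 := by
        rw [hAhdef, Matrix.submatrix_submatrix]
        simp [Equiv.self_comp_symm]
      set Bf := Bh.submatrix ⇑(ee n).symm ⇑(ee n).symm with hBf
      have hcongF : Bfᵀ * A1 * Bf = Dmat (n + 1) (Fin.cons c ε') := by
        rw [hBf, Matrix.transpose_submatrix, ← hAh_back]
        rw [Matrix.submatrix_mul_equiv, Matrix.submatrix_mul_equiv]
        rw [hcong3, hA11D2, ← Dsplit n c ε', Matrix.submatrix_submatrix]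
        simp [Equiv.self_comp_symm]
      set P : Matrix (Fin (2 * (n + 1))) (Fin (2 * (n + 1))) ℝ :=
        (1 : Matrix _ _ ℝ).submatrix ⇑ρ.symm id with hP
      have hPt : Pᵀ = (1 : Matrix _ _ ℝ).submatrix id ⇑ρ.symm := by
        rw [hP, Matrix.transpose_submatrix, Matrix.transpose_one]
      have hAP : A * P = A.submatrix id ⇑ρ := by
        rw [hP, Matrix.mul_submatrix_one]
        simp
      have hPAP : Pᵀ * A * P = A1 := by
        rw [Matrix.mul_assoc, hAP, hPt, Matrix.one_submatrix_mul, Matrix.submatrix_submatrix,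
          hA1def]
        simp
      have hPP : Pᵀ * P = 1 := by
        rw [hPt, hP, Matrix.one_submatrix_mul, Matrix.submatrix_submatrix]
        simp [Equiv.symm_comp_self]
      have hPdet : IsUnit P.det := Matrix.isUnit_det_of_left_inverse hPP
      refine ⟨P * Bf, Fin.cons c ε', ?_, ?_⟩
      · rw [Matrix.det_mul]
        refine hPdet.mul ?_
        rw [hBf, Matrix.det_submatrix_equiv_self]
        exact hBhdet
      · have hassoc : (P * Bf)ᵀ * A * (P * Bf) = Bfᵀ * (Pᵀ * A * P) * Bf := by
          rw [Matrix.transpose_mul]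
          simp only [Matrix.mul_assoc]
        rw [hassoc, hPAP, hcongF]
theorem pf_sq (n : ℕ) (A : Matrix (Fin (2 * n)) (Fin (2 * n)) ℝ) (hA : Aᵀ = -A) :
    (pfaffian n A) ^ 2 = A.det := by
  obtain ⟨B, ε, hBu, hBA⟩ := skew_canonical n A hA
  have h1 : (∏ i, ε i) = B.det * pfaffian n A := by
    rw [← pf_Dmat n ε, ← hBA, pf_congruence]
  have h2 : (∏ i, (ε i) ^ 2) = B.det ^ 2 * A.det := by
    rw [← det_Dmat n ε, ← hBA, Matrix.det_mul, Matrix.det_mul, Matrix.det_transpose]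
    ring
  have h3 : (∏ i, ε i) ^ 2 = ∏ i, (ε i) ^ 2 := by rw [← Finset.prod_pow]
  have h4 : B.det ^ 2 * (pfaffian n A) ^ 2 = B.det ^ 2 * A.det := by
    rw [← h2, ← h3, h1]
    ring
  exact mul_left_cancel₀ (pow_ne_zero 2 hBu.ne_zero) h4

lemma det_jacobi {m l : Type*} [Fintype m] [DecidableEq m] [Fintype l] [DecidableEq l]
    (M : Matrix (m ⊕ l) (m ⊕ l) ℝ) (hM : IsUnit M.det) :
    M.toBlocks₂₂.det = M.det * (M⁻¹.toBlocks₁₁).det := by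
  set A := M.toBlocks₁₁ with hA
  set B := M.toBlocks₁₂ with hB
  set C := M.toBlocks₂₁ with hC
  set D := M.toBlocks₂₂ with hD
  have hblocks : Matrix.fromBlocks A B C D = M := Matrix.fromBlocks_toBlocks M
  by_cases hDu : IsUnit D.det
  · haveI iD : Invertible D := D.invertibleOfIsUnitDet hDu
    haveI iM : Invertible (Matrix.fromBlocks A B C D) :=
      Matrix.invertibleOfIsUnitDet _ (by rw [hblocks]; exact hM)
    haveI iS : Invertible (A - B * ⅟D * C) :=
      Matrix.invertibleOfFromBlocks₂₂Invertible A B C D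
    have h1 : M.det = D.det * (A - B * ⅟D * C).det := by
      rw [← hblocks, Matrix.det_fromBlocks₂₂]
    have h2 : M⁻¹.toBlocks₁₁ = ⅟(A - B * ⅟D * C) := by
      have hMinv : M⁻¹ = ⅟(Matrix.fromBlocks A B C D) := by
        rw [Matrix.invOf_eq_nonsing_inv]
        rw [hblocks]
      rw [hMinv, Matrix.invOf_fromBlocks₂₂_eq]
      rfl
    have hSu : IsUnit (A - B * ⅟D * C).det := Matrix.isUnit_det_of_invertible _
    rw [h2, h1, Matrix.invOf_eq_nonsing_inv (A - B * ⅟D * C), Matrix.det_nonsing_inv,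
      Ring.inverse_eq_inv]
    rw [mul_assoc, mul_inv_cancel₀ hSu.ne_zero, mul_one]
  · have hD0 : D.det = 0 := by
      by_contra h
      exact hDu (isUnit_iff_ne_zero.mpr h)
    rw [hD0]
    suffices h : (M⁻¹.toBlocks₁₁).det = 0 by rw [h, mul_zero]
    by_contra h0
    have hU : IsUnit (M⁻¹.toBlocks₁₁).det := isUnit_iff_ne_zero.mpr h0
    set N := M⁻¹ with hN
    set A' := N.toBlocks₁₁ with hA'
    set B' := N.toBlocks₁₂ with hB'
    set C' := N.toBlocks₂₁ with hC'
    set D' := N.toBlocks₂₂ with hD'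
    have hblocks' : Matrix.fromBlocks A' B' C' D' = N := Matrix.fromBlocks_toBlocks N
    haveI iA' : Invertible A' := A'.invertibleOfIsUnitDet hU
    haveI iN : Invertible (Matrix.fromBlocks A' B' C' D') :=
      Matrix.invertibleOfIsUnitDet _ (by
        rw [hblocks', hN]
        exact Matrix.isUnit_nonsing_inv_det M hM)
    haveI iS' : Invertible (D' - C' * ⅟A' * B') :=
      Matrix.invertibleOfFromBlocks₁₁Invertible A' B' C' D'
    have hMN : M = (Matrix.fromBlocks A' B' C' D')⁻¹ := by
      rw [hblocks', hN, Matrix.nonsing_inv_nonsing_inv M hM]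
    have hM22 : D = ⅟(D' - C' * ⅟A' * B') := by
      rw [hD, hMN, ← Matrix.invOf_eq_nonsing_inv, Matrix.invOf_fromBlocks₁₁_eq]
      rfl
    apply hDu
    rw [hM22]
    exact Matrix.isUnit_det_of_invertible _

end PfAux

open Matrix PfAux in
/-- Jacobi's identity for Pfaffians: if `K` is an invertible skew-symmetric matrix indexed by a
finite set `V` and `E ⊆ V` has even cardinality, then
`Pf(K_{Eᶜ}) = ± Pf(K) · Pf((K⁻¹)_E)`; in particular
`|Pf(K_{Eᶜ})| = |Pf(K)| · |Pf((K⁻¹)_E)|`. -/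
theorem pfaffian_jacobi {V : Type*} [Fintype V] [DecidableEq V]
    (K : Matrix V V ℝ) (hskew : K.transpose = -K) (hinv : IsUnit K.det)
    (E : Finset V)
    (n k m : ℕ)
    (eV : V ≃ Fin (2 * n))
    (eE : {v : V // v ∈ E} ≃ Fin (2 * k))
    (eEc : {v : V // v ∉ E} ≃ Fin (2 * m))
    (pfV pfE pfEc : ℝ)
    (hpfV : pfV = pfaffian n (K.submatrix eV.symm eV.symm))
    (hpfE : pfE = pfaffian k ((K⁻¹).submatrix
      (fun i => (eE.symm i : V)) (fun j => (eE.symm j : V))))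
    (hpfEc : pfEc = pfaffian m (K.submatrix
      (fun i => (eEc.symm i : V)) (fun j => (eEc.symm j : V)))) :
    (pfEc = pfV * pfE ∨ pfEc = -(pfV * pfE)) ∧ |pfEc| = |pfV| * |pfE| := by
  classical
  set e : {v : V // v ∈ E} ⊕ {v : V // v ∉ E} ≃ V := Equiv.sumCompl (· ∈ E) with he
  set M := K.submatrix ⇑e ⇑e with hM
  have hMdet : M.det = K.det := Matrix.det_submatrix_equiv_self e K
  have hMu : IsUnit M.det := by rw [hMdet]; exact hinv
  have hMinv : M⁻¹ = (K⁻¹).submatrix ⇑e ⇑e := by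
    apply Matrix.inv_eq_right_inv
    rw [hM, Matrix.submatrix_mul_equiv, Matrix.mul_nonsing_inv _ hinv,
      Matrix.submatrix_one_equiv]
  have hKinvT : (K⁻¹)ᵀ = -(K⁻¹) := by
    rw [Matrix.transpose_nonsing_inv, hskew, matrix_inv_neg _ hinv]
  have hskew1 : (K.submatrix ⇑eV.symm ⇑eV.symm)ᵀ = -(K.submatrix ⇑eV.symm ⇑eV.symm) := by
    rw [Matrix.transpose_submatrix, hskew]
    ext i j
    simp
  have hskew2 : ((K⁻¹).submatrix (fun i => ((eE.symm i : {v : V // v ∈ E}) : V))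
      (fun j => ((eE.symm j : {v : V // v ∈ E}) : V)))ᵀ
      = -((K⁻¹).submatrix (fun i => ((eE.symm i : {v : V // v ∈ E}) : V))
      (fun j => ((eE.symm j : {v : V // v ∈ E}) : V))) := by
    rw [Matrix.transpose_submatrix, hKinvT]
    ext i j
    simp
  have hskew3 : ((K).submatrix (fun i => ((eEc.symm i : {v : V // v ∉ E}) : V))
      (fun j => ((eEc.symm j : {v : V // v ∉ E}) : V)))ᵀ
      = -((K).submatrix (fun i => ((eEc.symm i : {v : V // v ∉ E}) : V))
      (fun j => ((eEc.symm j : {v : V // v ∉ E}) : V))) := by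
    rw [Matrix.transpose_submatrix, hskew]
    ext i j
    simp
  have h1 : pfV ^ 2 = K.det := by
    rw [hpfV, pf_sq _ _ hskew1, Matrix.det_submatrix_equiv_self]
  have hblk11 : M⁻¹.toBlocks₁₁
      = (K⁻¹).submatrix (fun i : {v : V // v ∈ E} => (i : V))
        (fun j : {v : V // v ∈ E} => (j : V)) := by
    rw [hMinv]
    ext i j
    simp [Matrix.toBlocks₁₁, Matrix.submatrix_apply, he]
  have hblk22 : M.toBlocks₂₂
      = K.submatrix (fun i : {v : V // v ∉ E} => (i : V))
        (fun j : {v : V // v ∉ E} => (j : V)) := by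
    rw [hM]
    ext i j
    simp [Matrix.toBlocks₂₂, Matrix.submatrix_apply, he]
  have h2 : pfE ^ 2 = (M⁻¹.toBlocks₁₁).det := by
    rw [hpfE, pf_sq _ _ hskew2, hblk11]
    rw [show ((K⁻¹).submatrix (fun i => ((eE.symm i : {v : V // v ∈ E}) : V))
        (fun j => ((eE.symm j : {v : V // v ∈ E}) : V)))
        = ((K⁻¹).submatrix (fun i : {v : V // v ∈ E} => (i : V))
            (fun j : {v : V // v ∈ E} => (j : V))).submatrix ⇑eE.symm ⇑eE.symm from rfl]
    rw [Matrix.det_submatrix_equiv_self]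
  have h3 : pfEc ^ 2 = (M.toBlocks₂₂).det := by
    rw [hpfEc, pf_sq _ _ hskew3, hblk22]
    rw [show (K.submatrix (fun i => ((eEc.symm i : {v : V // v ∉ E}) : V))
        (fun j => ((eEc.symm j : {v : V // v ∉ E}) : V)))
        = (K.submatrix (fun i : {v : V // v ∉ E} => (i : V))
            (fun j : {v : V // v ∉ E} => (j : V))).submatrix ⇑eEc.symm ⇑eEc.symm from rfl]
    rw [Matrix.det_submatrix_equiv_self]
  have hj := det_jacobi M hMu
  have key : pfEc ^ 2 = (pfV * pfE) ^ 2 := by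
    rw [h3, hj, hMdet, mul_pow, h1, h2]
  have habs : |pfEc| = |pfV * pfE| := (sq_eq_sq_iff_abs_eq_abs _ _).mp key
  exact ⟨abs_eq_abs.mp habs, by rw [habs, abs_mul]⟩
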